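/- Under the hypotheses of the Lyapunov drift bound, if at every slot t the controls satisfy y_n(t) - ∑_k x_{k,n}(t) ≤ -δ, x_{n,k}(t) - d_{n,k}(t) ≤ -δ, α_{n,k}(t)d_{n,k}(t) - e_{n,k}(t) ≤ -δ, and e_{n,k}(t) - h_{n,k}(t) ≤ -δ for some δ > 0 (in the weighted sense: the total drift cross-term is at most -2δ times the total queue backlog), then limsup_{T→∞} (1/T) ∑_{t=0}^{T-1} [∑_n S_n(t) + ∑_{n,k}(U_{n,k}(t) + Q_{n,k}(t) + Z_{n,k}(t))] ≤ B/(2δ), i.e., the time-average total queue backlog is bounded. -/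

import Mathlib

theorem stmt10 (N : ℕ)
    (S : ℕ → Fin N → ℝ) (U Q Z : ℕ → Fin N → Fin N → ℝ)
    (B δ : ℝ) (hB : 0 ≤ B) (hδ : 0 < δ)
    (hSnn : ∀ t n, 0 ≤ S t n) (hUnn : ∀ t n k, 0 ≤ U t n k)
    (hQnn : ∀ t n k, 0 ≤ Q t n k) (hZnn : ∀ t n k, 0 ≤ Z t n k)
    -- drift bound with per-slot negative drift proportional to the backlog
    -- (the weighted sense: cross terms are at most -2δ times the total backlog)
    (hdrift : ∀ t : ℕ,
      (∑ n, S (t + 1) n ^ 2 + ∑ n, ∑ k, (U (t + 1) n k ^ 2 + Q (t + 1) n k ^ 2 +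
          Z (t + 1) n k ^ 2)) -
        (∑ n, S t n ^ 2 + ∑ n, ∑ k, (U t n k ^ 2 + Q t n k ^ 2 + Z t n k ^ 2)) ≤
      B - 2 * δ * (∑ n, S t n + ∑ n, ∑ k, (U t n k + Q t n k + Z t n k))) :
    Filter.limsup
      (fun T : ℕ =>
        (∑ t ∈ Finset.range T,
          (∑ n, S t n + ∑ n, ∑ k, (U t n k + Q t n k + Z t n k))) / T)
      Filter.atTop ≤ B / (2 * δ) := by
  set L : ℕ → ℝ := fun t =>
    ∑ n, S t n ^ 2 + ∑ n, ∑ k, (U t n k ^ 2 + Q t n k ^ 2 + Z t n k ^ 2) with hL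
  set g : ℕ → ℝ := fun t =>
    ∑ n, S t n + ∑ n, ∑ k, (U t n k + Q t n k + Z t n k) with hg
  have hLnn : ∀ t, 0 ≤ L t := by
    intro t
    apply add_nonneg <;> apply Finset.sum_nonneg <;> intro n _
    · positivity
    · apply Finset.sum_nonneg; intro k _; positivity
  have hgnn : ∀ t, 0 ≤ g t := by
    intro t
    apply add_nonneg <;> apply Finset.sum_nonneg <;> intro n _
    · exact hSnn t n
    · apply Finset.sum_nonneg; intro k _
      have := hUnn t n k; have := hQnn t n k; have := hZnn t n k; linarith
  have hsum : ∀ T : ℕ, 2 * δ * ∑ t ∈ Finset.range T, g t ≤ T * B + L 0 := by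
    intro T
    have htel : ∑ t ∈ Finset.range T, (L (t + 1) - L t) = L T - L 0 :=
      Finset.sum_range_sub L T
    have hle : ∑ t ∈ Finset.range T, (L (t + 1) - L t) ≤
        ∑ t ∈ Finset.range T, (B - 2 * δ * g t) :=
      Finset.sum_le_sum fun t _ => hdrift t
    have : ∑ t ∈ Finset.range T, (B - 2 * δ * g t)
        = T * B - 2 * δ * ∑ t ∈ Finset.range T, g t := by
      rw [Finset.sum_sub_distrib, Finset.sum_const, Finset.card_range,
        ← Finset.mul_sum]
      ring
    have hLT := hLnn T
    rw [htel, this] at hle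
    linarith
  have key : ∀ T : ℕ,
      (∑ t ∈ Finset.range T, g t) / T ≤ B / (2 * δ) + L 0 / (2 * δ) * (1 / T) := by
    intro T
    rcases Nat.eq_zero_or_pos T with h | h
    · subst h
      simp [div_nonneg hB (by linarith : (0:ℝ) ≤ 2 * δ)]
    · have hT : (0:ℝ) < T := by exact_mod_cast h
      rw [div_le_iff₀ hT]
      have h2δ : (0:ℝ) < 2 * δ := by linarith
      have : (∑ t ∈ Finset.range T, g t) ≤ (T * B + L 0) / (2 * δ) := by
        rw [le_div_iff₀ h2δ]; linarith [hsum T]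
      calc (∑ t ∈ Finset.range T, g t) ≤ (T * B + L 0) / (2 * δ) := this
        _ = (B / (2 * δ) + L 0 / (2 * δ) * (1 / T)) * T := by
            field_simp
  have htend : Filter.Tendsto
      (fun T : ℕ => B / (2 * δ) + L 0 / (2 * δ) * (1 / T)) Filter.atTop
      (nhds (B / (2 * δ))) := by
    have : Filter.Tendsto (fun T : ℕ => (1:ℝ) / T) Filter.atTop (nhds 0) :=
      tendsto_one_div_atTop_nhds_zero_nat
    have := (this.const_mul (L 0 / (2 * δ))).const_add (B / (2 * δ))
    simpa using this
  have hbdd : Filter.IsBoundedUnder (· ≤ ·) Filter.atTop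
      (fun T : ℕ => B / (2 * δ) + L 0 / (2 * δ) * (1 / T)) :=
    htend.isBoundedUnder_le
  have hcob : Filter.IsCoboundedUnder (· ≤ ·) Filter.atTop
      (fun T : ℕ => (∑ t ∈ Finset.range T, g t) / T) := by
    refine Filter.isCoboundedUnder_le_of_le Filter.atTop (x := 0) fun T => ?_
    exact div_nonneg (Finset.sum_nonneg fun t _ => hgnn t) (Nat.cast_nonneg T)
  calc Filter.limsup (fun T : ℕ => (∑ t ∈ Finset.range T, g t) / T) Filter.atTop
      ≤ Filter.limsup (fun T : ℕ => B / (2 * δ) + L 0 / (2 * δ) * (1 / T))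
          Filter.atTop :=
        Filter.limsup_le_limsup (Filter.Eventually.of_forall key) hcob hbdd
    _ = B / (2 * δ) := htend.limsup_eq
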